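/- The waste function Waste(T) = T/(2μ) + C(1 − (D+R+μd)/μ)/T + (D+R+μd − C/2)/μ, defined for T > 0, is uniquely minimized at T_opt = √(2C(μ − D − R − μd)), provided μ > D + R + μd and C > 0. -/

import Mathlib

open Set

/-- The waste function Waste(T) = T/(2μ) + C(1−(D+R+μd)/μ)/T + (D+R+μd−C/2)/μ
is uniquely minimized over T > 0 at T_opt = √(2C(μ − D − R − μd)). -/
theorem waste_unique_minimizer (mu C D R mud : ℝ) (hC : 0 < C)
    (hD : 0 ≤ D) (hR : 0 ≤ R) (hmud : 0 ≤ mud) (hmu : D + R + mud < mu) :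
    let Waste : ℝ → ℝ := fun T =>
      T / (2 * mu) + C * (1 - (D + R + mud) / mu) / T + (D + R + mud - C / 2) / mu
    let Topt := Real.sqrt (2 * C * (mu - D - R - mud))
    0 < Topt ∧ (∀ T ∈ Ioi (0:ℝ), Waste Topt ≤ Waste T) ∧
      (∀ T ∈ Ioi (0:ℝ), Waste T = Waste Topt → T = Topt) := by
  intro Waste Topt
  have hs : (0:ℝ) ≤ D + R + mud := by positivity
  have hmu0 : 0 < mu := lt_of_le_of_lt hs hmu
  have harg : 0 < 2 * C * (mu - D - R - mud) := by nlinarith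
  have hT0 : 0 < Topt := Real.sqrt_pos.mpr harg
  have hsq : Topt ^ 2 = 2 * C * (mu - D - R - mud) := Real.sq_sqrt harg.le
  have key : ∀ T ∈ Ioi (0:ℝ), Waste T - Waste Topt = (T - Topt)^2 / (2 * mu * T) := by
    intro T hT
    have hT' : (0:ℝ) < T := hT
    show (T / (2 * mu) + C * (1 - (D + R + mud) / mu) / T + (D + R + mud - C / 2) / mu)
        - (Topt / (2 * mu) + C * (1 - (D + R + mud) / mu) / Topt + (D + R + mud - C / 2) / mu)
        = (T - Topt)^2 / (2 * mu * T)
    field_simp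
    linear_combination (T - Topt) * hsq
  refine ⟨hT0, ?_, ?_⟩
  · intro T hT
    have h := key T hT
    have hT' : (0:ℝ) < T := hT
    rw [← sub_nonneg, h]
    positivity
  · intro T hT hEq
    have h := key T hT
    have hT' : (0:ℝ) < T := hT
    rw [hEq, sub_self] at h
    have h2 : (T - Topt)^2 = 0 := by
      have hpos : (2 * mu * T) ≠ 0 := by positivity
      rcases div_eq_zero_iff.mp h.symm with h | h
      · exact h
      · exact absurd h hpos
    have := sq_eq_zero_iff.mp h2
    linarith
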